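/- For every natural number n and every integer x, the operator Z acts on the basis functions φ_n by (Z φ_n(·;α))(x) = φ_{n+1}(x;α) − φ_n(x;α). -/
import Mathlib


/-- Pochhammer symbol `(a)_k = a (a+1) ⋯ (a+k-1)`, with `(a)_0 = 1`. -/
noncomputable def poch (a : ℝ) (k : ℕ) : ℝ := ∏ i ∈ Finset.range k, (a + (i : ℝ))

/-- Basis functions `φ_n(x;α) = (-x)_n / (α-x)_n`. -/
noncomputable def phi (α : ℝ) (n : ℕ) (x : ℤ) : ℝ :=
  poch (-(x : ℝ)) n / poch (α - (x : ℝ)) n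

/-- The difference operator `Z`: `(Z f)(x) = -f(x) + (x/(x-α)) f(x-1)`. -/
noncomputable def Zop (α : ℝ) (f : ℤ → ℝ) (x : ℤ) : ℝ :=
  -f x + ((x : ℝ) / ((x : ℝ) - α)) * f (x - 1)

lemma poch_succ' (a : ℝ) (n : ℕ) : poch a (n + 1) = a * poch (a + 1) n := by
  unfold poch
  rw [Finset.prod_range_succ']
  push_cast
  rw [mul_comm]
  congr 1
  · simp
  · apply Finset.prod_congr rfl
    intro i _
    ring

lemma poch_alpha_ne (α : ℝ) (hα : ∀ m : ℤ, α ≠ (m : ℝ)) (y : ℤ) (n : ℕ) :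
    poch (α - (y : ℝ)) n ≠ 0 := by
  unfold poch
  rw [Finset.prod_ne_zero_iff]
  intro i _ h
  exact hα (y - i) (by push_cast; linarith)

theorem statement1 (α : ℝ) (hα : ∀ m : ℤ, α ≠ (m : ℝ)) (n : ℕ) (x : ℤ) :
    Zop α (phi α n) x = phi α (n + 1) x - phi α n x := by
  have hxα : (x : ℝ) - α ≠ 0 := fun h => hα x (by linarith)
  have hB : poch (α - (x : ℝ) + 1) n ≠ 0 := by
    have h := poch_alpha_ne α hα (x - 1) n
    have : α - ((x - 1 : ℤ) : ℝ) = α - (x : ℝ) + 1 := by push_cast; ring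
    rwa [this] at h
  unfold Zop phi
  rw [poch_succ', poch_succ']
  have hαx : α - (x : ℝ) ≠ 0 := fun h => hxα (by linarith)
  push_cast
  have h1 : -((x : ℝ) - 1) = -(x : ℝ) + 1 := by ring
  have h2 : α - ((x : ℝ) - 1) = α - (x : ℝ) + 1 := by ring
  rw [h1, h2]
  field_simp
  ring
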